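/- For positive integers n and 0 ≤ k ≤ n, the polynomial h(τ_{n,k}, t) := ∑_{j=0}^{n} h_j t^j, where h_{n-j} = ∑_{i=0}^{n-k} C(n-k,i)·C(k,j-i)·C(n-k+j-i,j), is palindromic: h_j = h_{n-j} for all 0 ≤ j ≤ n. -/

import Mathlib

open Finset

/-- Trinomial revision identity, valid unconditionally over ℕ. -/
lemma trinom (k l t : ℕ) :
    k.choose l * (k - l).choose t = k.choose (l + t) * (l + t).choose l := by
  rcases le_or_gt (l + t) k with h | h
  · have := Nat.choose_mul (n := k) (k := l + t) (s := l) (Nat.le_add_right l t)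
    simpa using this.symm
  · rcases le_or_gt l k with h' | h'
    · rw [Nat.choose_eq_zero_of_lt (n := k - l) (k := t) (by omega),
        Nat.choose_eq_zero_of_lt (n := k) (k := l + t) h]
      ring
    · rw [Nat.choose_eq_zero_of_lt (n := k) (k := l) h',
        Nat.choose_eq_zero_of_lt (n := k) (k := l + t) (by omega)]
      ring

/-- Extend a range sum with a guard. -/
lemma sum_range_extend (f : ℕ → ℕ) {N M : ℕ} (h : N ≤ M) :
    ∑ x ∈ range N, f x = ∑ x ∈ range M, if x < N then f x else 0 := by
  rw [← Finset.sum_subset (Finset.range_subset_range.mpr h)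
    (fun x _ hx => if_neg (by simp only [Finset.mem_range] at hx ⊢; omega))]
  exact Finset.sum_congr rfl fun x hx => (if_pos (Finset.mem_range.mp hx)).symm

/-- The statement's sum equals the antidiagonal form. -/
lemma sum_eq_S (m k j : ℕ) :
    ∑ i ∈ range (m + 1), m.choose i *
        (if i ≤ j then k.choose (j - i) * (m + j - i).choose j else 0)
      = ∑ p ∈ Finset.HasAntidiagonal.antidiagonal j,
          m.choose p.1 * (k.choose p.2 * (m + p.2).choose j) := by
  rw [Finset.Nat.sum_antidiagonal_eq_sum_range_succ_mk]
  trans ∑ i ∈ range (m + j + 1),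
      (if i ≤ j then m.choose i * (k.choose (j - i) * (m + j - i).choose j) else 0)
  · rw [sum_range_extend
      (f := fun i => m.choose i * (if i ≤ j then k.choose (j - i) * (m + j - i).choose j else 0))
      (M := m + j + 1) (by omega)]
    apply Finset.sum_congr rfl
    intro i hi
    simp only [Finset.mem_range] at hi
    rcases lt_or_ge i (m + 1) with h1 | h1
    · rw [if_pos h1, mul_ite, mul_zero]
    · rw [if_neg (by omega), Nat.choose_eq_zero_of_lt (by omega)]
      simp
  · rw [sum_range_extend
      (f := fun i => m.choose i * (k.choose (j - i) * (m + (j - i)).choose j))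
      (M := m + j + 1) (by omega)]
    apply Finset.sum_congr rfl
    intro i hi
    rcases le_or_gt i j with h | h
    · rw [if_pos h, if_pos (by omega), Nat.add_sub_assoc h]
    · rw [if_neg (by omega), if_neg (by omega)]

/-- Reflection: S(j) = U(m+k-j). -/
lemma lemA (m k j : ℕ) (hj : j ≤ m + k) :
    ∑ p ∈ Finset.HasAntidiagonal.antidiagonal j, m.choose p.1 * (k.choose p.2 * (m + p.2).choose j)
      = ∑ p ∈ Finset.HasAntidiagonal.antidiagonal (m + k - j),
          k.choose p.1 * (m.choose p.2 * (m + (k - p.1)).choose p.2) := by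
  rw [← Finset.sum_filter_of_ne (p := fun p : ℕ × ℕ => p.1 ≤ m ∧ p.2 ≤ k)
    (fun p _ hne => by
      constructor <;> by_contra hc <;> push_neg at hc <;> apply hne
      · simp [Nat.choose_eq_zero_of_lt hc]
      · simp [Nat.choose_eq_zero_of_lt hc])]
  rw [← Finset.sum_filter_of_ne (p := fun p : ℕ × ℕ => p.1 ≤ k ∧ p.2 ≤ m)
    (f := fun p => k.choose p.1 * (m.choose p.2 * (m + (k - p.1)).choose p.2))
    (fun p _ hne => by
      constructor <;> by_contra hc <;> push_neg at hc <;> apply hne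
      · simp [Nat.choose_eq_zero_of_lt hc]
      · simp [Nat.choose_eq_zero_of_lt hc])]
  apply Finset.sum_nbij' (i := fun p : ℕ × ℕ => (k - p.2, m - p.1))
    (j := fun p : ℕ × ℕ => (m - p.2, k - p.1))
  · intro p hp
    simp only [Finset.mem_filter, Finset.HasAntidiagonal.mem_antidiagonal] at hp ⊢
    omega
  · intro p hp
    simp only [Finset.mem_filter, Finset.HasAntidiagonal.mem_antidiagonal] at hp ⊢
    omega
  · intro p hp
    simp only [Finset.mem_filter, Finset.HasAntidiagonal.mem_antidiagonal] at hp
    have : (m - (m - p.1), k - (k - p.2)) = p := by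
      ext <;> simp <;> omega
    exact this
  · intro p hp
    simp only [Finset.mem_filter, Finset.HasAntidiagonal.mem_antidiagonal] at hp
    have : (k - (k - p.1), m - (m - p.2)) = p := by
      ext <;> simp <;> omega
    exact this
  · intro p hp
    simp only [Finset.mem_filter, Finset.HasAntidiagonal.mem_antidiagonal] at hp
    obtain ⟨hsum, h1, h2⟩ := hp
    have e1 : k.choose (k - p.2) = k.choose p.2 := Nat.choose_symm h2
    have e2 : m.choose (m - p.1) = m.choose p.1 := Nat.choose_symm h1
    have e3 : k - (k - p.2) = p.2 := by omega
    have e4 : (m + p.2).choose (m - p.1) = (m + p.2).choose j := by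
      have h5 : j ≤ m + p.2 := by omega
      have h6 : m - p.1 = m + p.2 - j := by omega
      rw [h6, Nat.choose_symm h5]
    simp only [e1, e2, e3, e4]
    ring

/-- Vandermonde step: U(j) = S(j). -/
lemma lemB (m k j : ℕ) :
    ∑ p ∈ Finset.HasAntidiagonal.antidiagonal j,
        k.choose p.1 * (m.choose p.2 * (m + (k - p.1)).choose p.2)
      = ∑ p ∈ Finset.HasAntidiagonal.antidiagonal j,
          m.choose p.1 * (k.choose p.2 * (m + p.2).choose j) := by
  rw [Finset.Nat.sum_antidiagonal_eq_sum_range_succ_mk,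
    Finset.Nat.sum_antidiagonal_eq_sum_range_succ_mk]
  -- expand the inner binomials by Vandermonde
  have L : ∀ l ∈ range (j + 1),
      k.choose l * (m.choose (j - l) * (m + (k - l)).choose (j - l))
        = ∑ s ∈ range (j + 1), if s < j - l + 1 then
            k.choose l * (m.choose (j - l) * (m.choose s * (k - l).choose (j - l - s)))
          else 0 := by
    intro l _
    rw [Nat.add_choose_eq m (k - l) (j - l),
      Finset.Nat.sum_antidiagonal_eq_sum_range_succ_mk]
    dsimp only
    rw [Finset.mul_sum, Finset.mul_sum,
      sum_range_extend
        (f := fun s => k.choose l * (m.choose (j - l) * (m.choose s * (k - l).choose (j - l - s))))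
        (N := j - l + 1) (M := j + 1) (by omega)]
  have R : ∀ s ∈ range (j + 1),
      m.choose s * (k.choose (j - s) * (m + (j - s)).choose j)
        = ∑ l ∈ range (j + 1),
            m.choose s * (k.choose (j - s) * ((j - s).choose l * m.choose (j - l))) := by
    intro s _
    rw [Nat.add_comm m (j - s), Nat.add_choose_eq (j - s) m j,
      Finset.Nat.sum_antidiagonal_eq_sum_range_succ_mk, Finset.mul_sum, Finset.mul_sum]
  rw [Finset.sum_congr rfl L, Finset.sum_congr rfl R, Finset.sum_comm]
  apply Finset.sum_congr rfl
  intro s hs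
  apply Finset.sum_congr rfl
  intro l hl
  simp only [Finset.mem_range] at hs hl
  rcases le_or_gt s (j - l) with h | h
  · rw [if_pos (by omega)]
    have hlt : l + (j - l - s) = j - s := by omega
    have h1 := trinom k l (j - l - s)
    rw [hlt] at h1
    calc k.choose l * (m.choose (j - l) * (m.choose s * (k - l).choose (j - l - s)))
        = k.choose l * (k - l).choose (j - l - s) * (m.choose (j - l) * m.choose s) := by ring
      _ = k.choose (j - s) * (j - s).choose l * (m.choose (j - l) * m.choose s) := by rw [h1]
      _ = m.choose s * (k.choose (j - s) * ((j - s).choose l * m.choose (j - l))) := by ring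
  · rw [if_neg (by omega), Nat.choose_eq_zero_of_lt (n := j - s) (k := l) (by omega)]
    ring

/-- Palindromicity of S. -/
lemma symmS (m k j : ℕ) (hj : j ≤ m + k) :
    ∑ p ∈ Finset.HasAntidiagonal.antidiagonal j, m.choose p.1 * (k.choose p.2 * (m + p.2).choose j)
      = ∑ p ∈ Finset.HasAntidiagonal.antidiagonal (m + k - j),
          m.choose p.1 * (k.choose p.2 * (m + p.2).choose (m + k - j)) :=
  (lemA m k j hj).trans (lemB m k (m + k - j))

/-- `h (n-j)` : the coefficient of `t^(n-j)` in `h(τ_{n,k}, t)`. -/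
theorem stmt_2 (n k : ℕ) (hn : 0 < n) (hk : k ≤ n)
    (h : ℕ → ℕ)
    (hdef : ∀ j ≤ n, h (n - j) =
      ∑ i ∈ Finset.range (n - k + 1),
        (n - k).choose i *
          (if i ≤ j then k.choose (j - i) * (n - k + j - i).choose j else 0)) :
    ∀ j ≤ n, h j = h (n - j) := by
  intro j hj
  have e1 := hdef (n - j) (Nat.sub_le n j)
  rw [Nat.sub_sub_self hj] at e1
  rw [e1, hdef j hj]
  set m := n - k with hm
  have hmk : m + k = n := by omega
  rw [sum_eq_S m k (n - j), sum_eq_S m k j]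
  have h1 : n - j = m + k - j := by omega
  rw [h1]
  exact (symmS m k j (by omega)).symm
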